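/- The total number of partitions of the vertex set of the cycle C_n (n ≥ 3) into non-empty independent sets equals Σ_{i≥0} (-1)^i B_{n-1-i}, where B_m is the m-th Bell number. -/

import Mathlib

open Finset SimpleGraph Polynomial

/-- Stirling numbers of the second kind. -/
def stirling2 : ℕ → ℕ → ℕ
  | 0, 0 => 1
  | 0, _ + 1 => 0
  | _ + 1, 0 => 0
  | n + 1, k + 1 => (k + 1) * stirling2 n (k + 1) + stirling2 n k

/-- Bell numbers. -/
def bell (n : ℕ) : ℕ := ∑ k ∈ Finset.range (n + 1), stirling2 n k

/-- `graphStirling G k` is the number of partitions of the vertex set of `G`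
into exactly `k` non-empty independent sets. -/
noncomputable def graphStirling {V : Type} [Fintype V] [DecidableEq V] (G : SimpleGraph V) (k : ℕ) : ℕ :=
  Nat.card {P : Finpartition (Finset.univ : Finset V) //
    P.parts.card = k ∧ ∀ p ∈ P.parts, ∀ u ∈ p, ∀ v ∈ p, ¬ G.Adj u v}

/-- The number of proper colorings of `G` with `x` colors
(the chromatic polynomial evaluated at `x`). -/
noncomputable def chromaticCount {V : Type} [Fintype V] (G : SimpleGraph V) (x : ℕ) : ℕ :=
  Nat.card {f : V → Fin x // ∀ u v, G.Adj u v → f u ≠ f v}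


lemma stirling2_eq_zero {m k : ℕ} (h : m < k) : stirling2 m k = 0 := by
  induction m generalizing k with
  | zero => obtain ⟨j, rfl⟩ := Nat.exists_eq_add_of_lt h; rfl
  | succ n ih =>
    obtain ⟨j, rfl⟩ : ∃ j, k = j + 1 := ⟨k - 1, by omega⟩
    show (j + 1) * stirling2 n (j + 1) + stirling2 n j = 0
    rw [ih (by omega), ih (by omega)]
    ring

lemma mul_descFactorial (x k : ℕ) :
    x * x.descFactorial k = x.descFactorial (k + 1) + k * x.descFactorial k := by
  rcases lt_or_ge x k with h | h
  · rw [Nat.descFactorial_eq_zero_iff_lt.2 h, Nat.descFactorial_eq_zero_iff_lt.2 (by omega)]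
    ring
  · rw [Nat.descFactorial_succ]
    nlinarith [Nat.sub_add_cancel h]

lemma stirling_desc (m x : ℕ) :
    ∑ k ∈ range (m + 1), (stirling2 m k : ℤ) * (x.descFactorial k : ℤ) = (x : ℤ) ^ m := by
  induction m with
  | zero => simp [stirling2]
  | succ m ih =>
    have key : ∀ k, (stirling2 (m+1) (k+1) : ℤ)
        = (k + 1) * stirling2 m (k + 1) + stirling2 m k := by
      intro k; push_cast [show stirling2 (m+1) (k+1) = (k + 1) * stirling2 m (k + 1) + stirling2 m k from rfl]; ring
    have hmd : ∀ k, ((x.descFactorial (k+1) : ℤ)) = x * x.descFactorial k - k * x.descFactorial k := by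
      intro k
      have h : (x:ℤ) * x.descFactorial k = x.descFactorial (k+1) + k * x.descFactorial k := by
        exact_mod_cast mul_descFactorial x k
      linarith
    rw [Finset.sum_range_succ' (fun k => (stirling2 (m+1) k : ℤ) * (x.descFactorial k : ℤ)) (m+1)]
    have h0 : (stirling2 (m+1) 0 : ℤ) * (x.descFactorial 0 : ℤ) = 0 := by
      cases m <;> simp [stirling2]
    rw [h0, add_zero]
    have expand : ∑ k ∈ range (m + 1), (stirling2 (m+1) (k+1) : ℤ) * (x.descFactorial (k+1) : ℤ)
        = ∑ k ∈ range (m + 1), (((k:ℤ)+1) * stirling2 m (k+1) * x.descFactorial (k+1))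
            + ∑ k ∈ range (m + 1), ((stirling2 m k : ℤ) * x * x.descFactorial k
                - (k:ℤ) * stirling2 m k * x.descFactorial k) := by
      rw [← Finset.sum_add_distrib]
      apply Finset.sum_congr rfl; intro k _
      rw [key, hmd]; ring
    rw [expand]
    have h1 : ∑ k ∈ range (m + 1), (((k:ℤ)+1) * stirling2 m (k+1) * x.descFactorial (k+1))
        = ∑ k ∈ range (m + 1), ((k:ℤ) * stirling2 m k * x.descFactorial k) := by
      rw [Finset.sum_range_succ' (fun k => (k:ℤ) * stirling2 m k * x.descFactorial k) m,
        Finset.sum_range_succ, stirling2_eq_zero (show m < m+1 by omega)]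
      push_cast; ring
    rw [h1, Finset.sum_sub_distrib]
    have h2 : ∑ k ∈ range (m + 1), (stirling2 m k : ℤ) * x * x.descFactorial k
        = x * ∑ k ∈ range (m + 1), (stirling2 m k : ℤ) * x.descFactorial k := by
      rw [Finset.mul_sum]; apply Finset.sum_congr rfl; intro k _; ring
    rw [h2, ih]; ring

lemma telescope (n : ℕ) (hn : 2 ≤ n) (y : ℤ) :
    (y - 1) ^ n + (-1) ^ n * (y - 1) = ∑ i ∈ range (n - 1), (-1) ^ i * y * (y - 1) ^ (n - 1 - i) := by
  induction n with
  | zero => omega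
  | succ m ih =>
    rcases Nat.lt_or_ge m 2 with h | h
    · interval_cases m
      · omega
      · norm_num; ring
    · obtain ⟨p, rfl⟩ : ∃ p, m = p + 2 := ⟨m - 2, by omega⟩
      have hr : p + 2 + 1 - 1 = p + 1 + 1 := rfl
      rw [hr, Finset.sum_range_succ' (fun i => (-1:ℤ) ^ i * y * (y - 1) ^ (p + 2 - i)) (p+1)]
      have e1 : ∑ i ∈ range (p + 1), (-1:ℤ) ^ (i+1) * y * (y - 1) ^ (p + 2 - (i+1))
          = -∑ i ∈ range (p + 1), (-1:ℤ) ^ i * y * (y - 1) ^ (p + 1 - i) := by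
        rw [← Finset.sum_neg_distrib]
        apply Finset.sum_congr rfl; intro i hi
        have h2 : p + 2 - (i+1) = p + 1 - i := by omega
        rw [h2]; ring
      rw [show p + 2 - 1 = p + 1 from rfl] at ih
      rw [e1, ← ih (by omega)]
      norm_num
      ring

lemma pos_stirling_desc (m x : ℕ) :
    (x : ℤ) * ((x:ℤ) - 1) ^ m = ∑ k ∈ range (m + 1), (stirling2 m k : ℤ) * ((x.descFactorial (k+1) : ℤ)) := by
  cases x with
  | zero => simp
  | succ y =>
    have e : ((y+1 : ℕ) : ℤ) = (y : ℤ) + 1 := by push_cast; ring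
    rw [e, show ((y:ℤ) + 1 - 1) = (y:ℤ) by ring, ← stirling_desc m y, Finset.mul_sum]
    apply Finset.sum_congr rfl; intro k _
    rw [Nat.succ_descFactorial_succ]
    push_cast; ring

lemma coeff_unique (N : ℕ) (c d : ℕ → ℤ)
    (h : ∀ x : ℕ, ∑ k ∈ range (N + 1), c k * (x.descFactorial k : ℤ)
        = ∑ k ∈ range (N + 1), d k * (x.descFactorial k : ℤ)) :
    ∀ j, j ≤ N → c j = d j := by
  intro j
  induction j using Nat.strong_induction_on with
  | _ j ih =>
    intro hj
    have hdiff : ∑ k ∈ range (N + 1), (c k - d k) * (j.descFactorial k : ℤ) = 0 := by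
      have e : ∑ k ∈ range (N + 1), (c k - d k) * (j.descFactorial k : ℤ)
          = ∑ k ∈ range (N + 1), c k * (j.descFactorial k : ℤ)
            - ∑ k ∈ range (N + 1), d k * (j.descFactorial k : ℤ) := by
        rw [← Finset.sum_sub_distrib]
        exact Finset.sum_congr rfl fun k _ => by ring
      rw [e, h j, sub_self]
    have single : ∑ k ∈ range (N + 1), (c k - d k) * (j.descFactorial k : ℤ)
        = (c j - d j) * (j.descFactorial j : ℤ) := by
      apply Finset.sum_eq_single_of_mem j (Finset.mem_range.2 (by omega))
      intro k _ hk
      rcases Nat.lt_or_ge k j with hlt | hge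
      · rw [ih k hlt (by omega)]; ring
      · rw [Nat.descFactorial_eq_zero_iff_lt.2 (by omega)]
        simp
    rw [single] at hdiff
    have : (j.descFactorial j : ℤ) ≠ 0 := by
      rw [Nat.descFactorial_self]
      exact_mod_cast Nat.factorial_ne_zero j
    have := mul_eq_zero.1 hdiff
    rcases this with h1 | h2
    · linarith [sub_eq_zero.1 h1]
    · exact absurd h2 this


lemma snoc_path_iff {n x : ℕ} (g : Fin (n+1) → Fin x) (c : Fin x) :
    (∀ i : Fin (n+1), (Fin.snoc g c : Fin (n+2) → Fin x) i.castSucc ≠ (Fin.snoc g c : Fin (n+2) → Fin x) i.succ)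
      ↔ (∀ i : Fin n, g i.castSucc ≠ g i.succ) ∧ c ≠ g (Fin.last n) := by
  constructor
  · intro h
    refine ⟨fun j => ?_, ?_⟩
    · have := h j.castSucc
      rwa [Fin.succ_castSucc, Fin.snoc_castSucc, Fin.snoc_castSucc] at this
    · have := h (Fin.last n)
      rw [Fin.succ_last, Fin.snoc_last, Fin.snoc_castSucc] at this
      exact Ne.symm this
  · rintro ⟨h1, h2⟩ i
    induction i using Fin.lastCases with
    | last =>
      rw [Fin.succ_last, Fin.snoc_last, Fin.snoc_castSucc]
      exact fun e => h2 e.symm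
    | cast j =>
      rw [Fin.succ_castSucc, Fin.snoc_castSucc, Fin.snoc_castSucc]
      exact h1 j

lemma Pp_card (n x : ℕ) :
    Fintype.card {f : Fin (n+1) → Fin x // ∀ i : Fin n, f i.castSucc ≠ f i.succ}
      = x * (x-1)^n := by
  induction n with
  | zero =>
    have e : {f : Fin 1 → Fin x // ∀ i : Fin 0, f i.castSucc ≠ f i.succ} ≃ (Fin 1 → Fin x) :=
      Equiv.subtypeUnivEquiv (fun f i => i.elim0)
    rw [Fintype.card_congr e]
    simp
  | succ n ih =>
    classical
    have key : ∀ f : Fin (n+2) → Fin x, (∀ i : Fin (n+1), f i.castSucc ≠ f i.succ) ↔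
        ((∀ i : Fin n, (Fin.init f) i.castSucc ≠ (Fin.init f) i.succ)
          ∧ f (Fin.last (n+1)) ≠ (Fin.init f) (Fin.last n)) := by
      intro f
      conv_lhs => rw [← Fin.snoc_init_self f]
      exact snoc_path_iff _ _
    have e : {f : Fin (n+2) → Fin x // ∀ i : Fin (n+1), f i.castSucc ≠ f i.succ}
        ≃ Σ g : {g : Fin (n+1) → Fin x // ∀ i : Fin n, g i.castSucc ≠ g i.succ},
            {c : Fin x // c ≠ g.1 (Fin.last n)} :=
      { toFun := fun f => ⟨⟨Fin.init f.1, ((key f.1).1 f.2).1⟩,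
          ⟨f.1 (Fin.last (n+1)), ((key f.1).1 f.2).2⟩⟩
        invFun := fun p => ⟨Fin.snoc p.1.1 p.2.1, (snoc_path_iff _ _).2 ⟨p.1.2, p.2.2⟩⟩
        left_inv := fun f => Subtype.ext (Fin.snoc_init_self f.1)
        right_inv := fun p => by
          obtain ⟨⟨g, hg⟩, ⟨c, hc⟩⟩ := p
          have gen : ∀ (g' : {g : Fin (n+1) → Fin x // ∀ i : Fin n, g i.castSucc ≠ g i.succ})
              (c' : {c : Fin x // c ≠ g'.1 (Fin.last n)}) (h1 : g' = ⟨g, hg⟩) (h2 : c'.1 = c),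
              (⟨g', c'⟩ : Σ g : {g : Fin (n+1) → Fin x // ∀ i : Fin n, g i.castSucc ≠ g i.succ},
                {c : Fin x // c ≠ g.1 (Fin.last n)}) = ⟨⟨g, hg⟩, ⟨c, hc⟩⟩ := by
            rintro g' c' rfl h2
            exact congrArg _ (Subtype.ext h2)
          exact gen _ _ (Subtype.ext (by simp)) (by simp) }
    rw [Fintype.card_congr e, Fintype.card_sigma]
    have hcard : ∀ g : {g : Fin (n+1) → Fin x // ∀ i : Fin n, g i.castSucc ≠ g i.succ},
        Fintype.card {c : Fin x // c ≠ g.1 (Fin.last n)} = x - 1 := by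
      intro g
      have : Fintype.card {c : Fin x // ¬ (c = g.1 (Fin.last n))} = x - 1 := by
        rw [Fintype.card_subtype_compl, Fintype.card_subtype_eq, Fintype.card_fin]
      exact this
    rw [Finset.sum_congr rfl (fun g _ => hcard g), Finset.sum_const, smul_eq_mul,
      Finset.card_univ, ih]
    cases x with
    | zero => simp
    | succ y => simp [Nat.succ_sub_one, pow_succ]; ring

lemma cyc_iff {n x : ℕ} (f : Fin (n+2) → Fin x) :
    (∀ u v, (SimpleGraph.cycleGraph (n+2)).Adj u v → f u ≠ f v) ↔ ∀ i, f i ≠ f (i + 1) := by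
  constructor
  · intro h i
    apply h
    rw [SimpleGraph.cycleGraph_adj]
    right
    simp
  · intro h u v hadj
    rw [SimpleGraph.cycleGraph_adj] at hadj
    rcases hadj with h1 | h1
    · have hu : u = v + 1 := by rw [← h1, add_sub_cancel]
      rw [hu]
      exact Ne.symm (h v)
    · have hv : v = u + 1 := by rw [← h1, add_sub_cancel]
      rw [hv]
      exact h u

lemma cyc_path_iff {n x : ℕ} (f : Fin (n+2) → Fin x) :
    (∀ i, f i ≠ f (i + 1)) ↔
      ((∀ i : Fin (n+1), f i.castSucc ≠ f i.succ) ∧ f (Fin.last (n+1)) ≠ f 0) := by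
  constructor
  · intro h
    refine ⟨fun i => ?_, ?_⟩
    · have := h i.castSucc
      rwa [Fin.coeSucc_eq_succ] at this
    · have := h (Fin.last (n+1))
      rwa [Fin.last_add_one] at this
  · rintro ⟨h1, h2⟩ i
    induction i using Fin.lastCases with
    | last => rwa [Fin.last_add_one]
    | cast j => rw [Fin.coeSucc_eq_succ]; exact h1 j

lemma wrap_iff {n x : ℕ} (f : Fin (n+3) → Fin x) (hlast : f (Fin.last (n+2)) = f 0) :
    (∀ i : Fin (n+2), f i.castSucc ≠ f i.succ) ↔
      (∀ i : Fin (n+2), f i.castSucc ≠ f (i+1).castSucc) := by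
  constructor
  · intro h i
    induction i using Fin.lastCases with
    | last =>
      rw [Fin.last_add_one, Fin.castSucc_zero, ← hlast]
      have := h (Fin.last (n+1))
      rwa [Fin.succ_last] at this
    | cast j =>
      rw [Fin.coeSucc_eq_succ]
      have := h j.castSucc
      rw [Fin.succ_castSucc] at this
      exact this
  · intro h i
    induction i using Fin.lastCases with
    | last =>
      rw [Fin.succ_last, hlast]
      have := h (Fin.last (n+1))
      rwa [Fin.last_add_one, Fin.castSucc_zero] at this
    | cast j =>
      rw [Fin.succ_castSucc]
      have := h j.castSucc
      rw [Fin.coeSucc_eq_succ] at this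
      exact this

lemma wrap_card (n x : ℕ) :
    Fintype.card {f : Fin (n+3) → Fin x //
        (∀ i : Fin (n+2), f i.castSucc ≠ f i.succ) ∧ f (Fin.last (n+2)) = f 0}
      = Fintype.card {g : Fin (n+2) → Fin x // ∀ i, g i ≠ g (i + 1)} := by
  apply Fintype.card_congr
  refine
    { toFun := fun f => ⟨fun i => f.1 i.castSucc, ?_⟩
      invFun := fun g => ⟨Fin.snoc g.1 (g.1 0), ?_, ?_⟩
      left_inv := ?_
      right_inv := ?_ }
  · intro i
    have := (wrap_iff f.1 f.2.2).1 f.2.1 i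
    exact this
  · -- path condition for snoc g (g 0)
    have hlast : (Fin.snoc g.1 (g.1 0) : Fin (n+3) → Fin x) (Fin.last (n+2))
        = (Fin.snoc g.1 (g.1 0) : Fin (n+3) → Fin x) 0 := by
      rw [Fin.snoc_last, show (0 : Fin (n+3)) = Fin.castSucc 0 from (Fin.castSucc_zero).symm,
        Fin.snoc_castSucc]
    rw [wrap_iff _ hlast]
    intro i
    rw [Fin.snoc_castSucc, Fin.snoc_castSucc]
    exact g.2 i
  · rw [Fin.snoc_last, show (0 : Fin (n+3)) = Fin.castSucc 0 from (Fin.castSucc_zero).symm,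
      Fin.snoc_castSucc]
  · intro f
    apply Subtype.ext
    funext i
    induction i using Fin.lastCases with
    | last =>
      show (Fin.snoc _ _ : Fin (n+3) → Fin x) _ = _
      rw [Fin.snoc_last, f.2.2]
      simp [Fin.castSucc_zero]
    | cast j =>
      show (Fin.snoc _ _ : Fin (n+3) → Fin x) _ = _
      rw [Fin.snoc_castSucc]
  · intro g
    apply Subtype.ext
    funext i
    show (Fin.snoc _ _ : Fin (n+3) → Fin x) _ = _
    rw [Fin.snoc_castSucc]

lemma subtype_split_card {α : Type*} [Fintype α] (P Q : α → Prop) [DecidablePred P] [DecidablePred Q] :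
    Fintype.card {a : α // P a ∧ Q a} + Fintype.card {a : α // P a ∧ ¬ Q a}
      = Fintype.card {a : α // P a} := by
  classical
  have e1 : {x : {a : α // P a} // Q x.1} ≃ {a : α // P a ∧ Q a} :=
    Equiv.subtypeSubtypeEquivSubtypeInter P Q
  have e2 : {x : {a : α // P a} // ¬ Q x.1} ≃ {a : α // P a ∧ ¬ Q a} :=
    Equiv.subtypeSubtypeEquivSubtypeInter P (fun a => ¬ Q a)
  have e3 : {x : {a : α // P a} // Q x.1} ⊕ {x : {a : α // P a} // ¬ Q x.1} ≃ {a : α // P a} :=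
    Equiv.sumCompl _
  calc Fintype.card {a : α // P a ∧ Q a} + Fintype.card {a : α // P a ∧ ¬ Q a}
      = Fintype.card ({x : {a : α // P a} // Q x.1} ⊕ {x : {a : α // P a} // ¬ Q x.1}) := by
        rw [Fintype.card_sum, Fintype.card_congr e1, Fintype.card_congr e2]
    _ = Fintype.card {a : α // P a} := Fintype.card_congr e3

lemma cyc_card_eq (n x : ℕ) :
    Fintype.card {f : Fin (n+2) → Fin x // ∀ u v, (SimpleGraph.cycleGraph (n+2)).Adj u v → f u ≠ f v}
      = Fintype.card {f : Fin (n+2) → Fin x // ∀ i, f i ≠ f (i + 1)} :=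
  Fintype.card_congr (Equiv.subtypeEquivRight (fun f => cyc_iff f))

lemma cyc_split (n x : ℕ) :
    Fintype.card {f : Fin (n+3) → Fin x // ∀ i, f i ≠ f (i + 1)}
      + Fintype.card {f : Fin (n+2) → Fin x // ∀ i, f i ≠ f (i + 1)}
      = x * (x-1)^(n+2) := by
  classical
  have h1 : Fintype.card {f : Fin (n+3) → Fin x // ∀ i, f i ≠ f (i + 1)}
      = Fintype.card {f : Fin (n+3) → Fin x //
          (∀ i : Fin (n+2), f i.castSucc ≠ f i.succ) ∧ ¬ (f (Fin.last (n+2)) = f 0)} := by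
    apply Fintype.card_congr
    apply Equiv.subtypeEquivRight
    intro f
    rw [cyc_path_iff f]
  rw [h1, ← wrap_card n x, add_comm]
  rw [subtype_split_card (fun f : Fin (n+3) → Fin x => ∀ i : Fin (n+2), f i.castSucc ≠ f i.succ)
    (fun f => f (Fin.last (n+2)) = f 0)]
  exact Pp_card (n+2) x

lemma natcast_pp (m x : ℕ) : ((x * (x-1)^m : ℕ) : ℤ) = (x : ℤ) * ((x:ℤ) - 1)^m := by
  cases x with
  | zero => simp
  | succ y => push_cast [Nat.succ_sub_one]; ring

lemma cycle_count_aux (n x : ℕ) :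
    (Fintype.card {f : Fin (n+2) → Fin x //
        ∀ u v, (SimpleGraph.cycleGraph (n+2)).Adj u v → f u ≠ f v} : ℤ)
      = ((x:ℤ) - 1)^(n+2) + (-1)^(n+2) * ((x:ℤ) - 1) := by
  induction n with
  | zero =>
    rw [cyc_card_eq 0 x]
    have base : Fintype.card {f : Fin 2 → Fin x // ∀ i, f i ≠ f (i + 1)}
        = Fintype.card {f : Fin 2 → Fin x // ∀ i : Fin 1, f i.castSucc ≠ f i.succ} := by
      apply Fintype.card_congr
      apply Equiv.subtypeEquivRight
      intro f
      constructor
      · intro h i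
        fin_cases i
        exact h 0
      · intro h i
        fin_cases i
        · exact h 0
        · exact Ne.symm (h 0)
    rw [base, Pp_card 1 x, natcast_pp 1 x]
    ring
  | succ m ih =>
    rw [cyc_card_eq (m+1) x]
    have key := cyc_split m x
    have : (Fintype.card {f : Fin (m+3) → Fin x // ∀ i, f i ≠ f (i + 1)} : ℤ)
        = (x : ℤ) * ((x:ℤ) - 1)^(m+2)
          - Fintype.card {f : Fin (m+2) → Fin x // ∀ i, f i ≠ f (i + 1)} := by
      rw [← natcast_pp (m+2) x, ← key]
      push_cast
      ring
    show (Fintype.card {f : Fin (m+3) → Fin x // ∀ i, f i ≠ f (i + 1)} : ℤ)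
        = ((x:ℤ) - 1)^(m+3) + (-1)^(m+3) * ((x:ℤ) - 1)
    rw [this, ← cyc_card_eq m x, ih]
    ring

lemma cycle_count (n x : ℕ) :
    (Nat.card {f : Fin (n+2) → Fin x //
        ∀ u v, (SimpleGraph.cycleGraph (n+2)).Adj u v → f u ≠ f v} : ℤ)
      = ((x:ℤ) - 1)^(n+2) + (-1)^(n+2) * ((x:ℤ) - 1) := by
  rw [Nat.card_eq_fintype_card]
  exact cycle_count_aux n x

section CountLemma

variable {V : Type} [Fintype V] [DecidableEq V]

instance : Finite (Finpartition (Finset.univ : Finset V)) :=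
  Finite.of_injective Finpartition.parts (fun _ _ h => Finpartition.ext h)

noncomputable instance : Fintype (Finpartition (Finset.univ : Finset V)) := Fintype.ofFinite _

noncomputable def fiberPart {x : ℕ} (f : V → Fin x) : Finpartition (Finset.univ : Finset V) :=
  letI : DecidableRel ⇑(Setoid.ker f) := fun a b => decidable_of_iff (f a = f b) Iff.rfl
  Finpartition.ofSetoid (Setoid.ker f)

lemma mem_fiberPart_part {x : ℕ} (f : V → Fin x) (a b : V) :
    b ∈ (fiberPart f).part a ↔ f a = f b := by
  letI : DecidableRel ⇑(Setoid.ker f) := fun a b => decidable_of_iff (f a = f b) Iff.rfl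
  exact Finpartition.mem_part_ofSetoid_iff_rel

lemma fiberPart_const {x : ℕ} (f : V → Fin x) {p : Finset V}
    (hp : p ∈ (fiberPart f).parts) {u v : V} (hu : u ∈ p) (hv : v ∈ p) : f u = f v := by
  have hpu : (fiberPart f).part u = p := (fiberPart f).part_eq_of_mem hp hu
  rw [← hpu] at hv
  exact (mem_fiberPart_part f u v).1 hv

lemma fiberPart_of_emb {x : ℕ} (P : Finpartition (Finset.univ : Finset V)) (g : ↥P.parts ↪ Fin x) :
    fiberPart (fun v => g ⟨P.part v, P.part_mem.2 (mem_univ v)⟩) = P := by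
  set f : V → Fin x := fun v => g ⟨P.part v, P.part_mem.2 (mem_univ v)⟩ with hfdef
  have hpart : ∀ a, (fiberPart f).part a = P.part a := by
    intro a
    ext b
    rw [mem_fiberPart_part]
    constructor
    · intro h
      have : P.part a = P.part b := by
        have := g.injective (a₁ := ⟨P.part a, P.part_mem.2 (mem_univ a)⟩)
          (a₂ := ⟨P.part b, P.part_mem.2 (mem_univ b)⟩) h
        exact congrArg Subtype.val this
      rw [this]
      exact P.mem_part (mem_univ b)
    · intro hb
      have : P.part b = P.part a := P.part_eq_of_mem (P.part_mem.2 (mem_univ a)) hb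
      show g _ = g _
      congr 1
      exact Subtype.ext this.symm
  apply Finpartition.ext
  ext p
  constructor
  · intro hp
    obtain ⟨a, ha⟩ := (fiberPart f).nonempty_of_mem_parts hp
    rw [← (fiberPart f).part_eq_of_mem hp ha, hpart]
    exact P.part_mem.2 (mem_univ a)
  · intro hp
    obtain ⟨a, ha⟩ := P.nonempty_of_mem_parts hp
    rw [← P.part_eq_of_mem hp ha, ← hpart]
    exact (fiberPart f).part_mem.2 (mem_univ a)

lemma fiber_equiv_card {x : ℕ} (P : Finpartition (Finset.univ : Finset V)) :
    Nat.card {f : V → Fin x // fiberPart f = P} = Nat.card (↥P.parts ↪ Fin x) := by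
  classical
  apply Nat.card_congr
  have choose_mem : ∀ p : ↥P.parts, (P.nonempty_of_mem_parts p.2).choose ∈ p.1 :=
    fun p => (P.nonempty_of_mem_parts p.2).choose_spec
  refine
    { toFun := fun f => ⟨fun p => f.1 (P.nonempty_of_mem_parts p.2).choose, ?_⟩
      invFun := fun g => ⟨fun v => g ⟨P.part v, P.part_mem.2 (mem_univ v)⟩, ?_⟩
      left_inv := ?_
      right_inv := ?_ }
  · -- injectivity
    intro p q h
    obtain ⟨f, hf⟩ := f
    dsimp at h
    set a := (P.nonempty_of_mem_parts p.2).choose with ha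
    set b := (P.nonempty_of_mem_parts q.2).choose with hb
    have hmem : b ∈ (fiberPart f).part a := (mem_fiberPart_part f a b).2 h
    rw [hf] at hmem
    have h1 : P.part a = p.1 := P.part_eq_of_mem p.2 (choose_mem p)
    have h2 : P.part b = q.1 := P.part_eq_of_mem q.2 (choose_mem q)
    have h3 : P.part b = P.part a := P.part_eq_of_mem (h1 ▸ P.part_mem.2 (mem_univ a)) hmem
    exact Subtype.ext (by rw [← h1, ← h2, h3])
  · exact fiberPart_of_emb P g
  · -- left inverse
    rintro ⟨f, hf⟩
    apply Subtype.ext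
    funext v
    have hm : P.part v ∈ P.parts := P.part_mem.2 (mem_univ v)
    show f (P.nonempty_of_mem_parts hm).choose = f v
    have key : ∀ c : V, c ∈ P.part v → f c = f v := by
      intro c hcm
      rw [← hf] at hcm
      exact ((mem_fiberPart_part f v c).1 hcm).symm
    exact key _ (P.nonempty_of_mem_parts hm).choose_spec
  · -- right inverse
    intro g
    apply DFunLike.ext
    intro p
    show g ⟨P.part (P.nonempty_of_mem_parts p.2).choose, _⟩ = g p
    congr 1
    exact Subtype.ext (P.part_eq_of_mem p.2 (choose_mem p))

lemma countA (G : SimpleGraph V) (x : ℕ) :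
    chromaticCount G x
      = ∑ k ∈ range (Fintype.card V + 1), graphStirling G k * Nat.descFactorial x k := by
  classical
  rw [chromaticCount, Nat.card_eq_fintype_card, Fintype.card_subtype]
  rw [Finset.card_eq_sum_card_fiberwise
    (f := fun f : V → Fin x => fiberPart f) (t := univ) (fun f _ => mem_univ _)]
  have hPval : ∀ P : Finpartition (Finset.univ : Finset V),
      ((univ.filter (fun f : V → Fin x => ∀ u v, G.Adj u v → f u ≠ f v)).filter
          (fun f => fiberPart f = P)).card
      = if (∀ p ∈ P.parts, ∀ u ∈ p, ∀ v ∈ p, ¬ G.Adj u v)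
          then x.descFactorial P.parts.card else 0 := by
    intro P
    rw [Finset.filter_filter]
    by_cases hind : (∀ p ∈ P.parts, ∀ u ∈ p, ∀ v ∈ p, ¬ G.Adj u v)
    · rw [if_pos hind]
      have hiff : ∀ f : V → Fin x,
          ((∀ u v, G.Adj u v → f u ≠ f v) ∧ fiberPart f = P) ↔ fiberPart f = P := by
        intro f
        constructor
        · exact And.right
        · intro hf
          refine ⟨?_, hf⟩
          intro u v hadj heq
          have hv : v ∈ (fiberPart f).part u := (mem_fiberPart_part f u v).2 heq
          have hu : u ∈ (fiberPart f).part u := (fiberPart f).mem_part (mem_univ u)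
          have hmem : (fiberPart f).part u ∈ (fiberPart f).parts :=
            (fiberPart f).part_mem.2 (mem_univ u)
          rw [hf] at hv hu hmem
          exact hind _ hmem u hu v hv hadj
      rw [Finset.filter_congr (fun f _ => by rw [hiff f])]
      have h1 : (univ.filter (fun f : V → Fin x => fiberPart f = P)).card
          = Nat.card {f : V → Fin x // fiberPart f = P} := by
        rw [Nat.card_eq_fintype_card, Fintype.card_subtype]
      rw [h1, fiber_equiv_card, Nat.card_eq_fintype_card, Fintype.card_embedding_eq,
        Fintype.card_fin, Fintype.card_coe]
    · rw [if_neg hind, Finset.card_eq_zero, Finset.filter_eq_empty_iff]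
      intro f _
      rintro ⟨hproper, hf⟩
      push_neg at hind
      obtain ⟨p, hp, u, hu, v, hv, hadj⟩ := hind
      rw [← hf] at hp
      exact hproper u v hadj (fiberPart_const f hp hu hv)
  rw [Finset.sum_congr rfl (fun P _ => hPval P)]
  rw [← Finset.sum_filter]
  have maps : ∀ P ∈ univ.filter
      (fun P : Finpartition (Finset.univ : Finset V) =>
        ∀ p ∈ P.parts, ∀ u ∈ p, ∀ v ∈ p, ¬ G.Adj u v),
      P.parts.card ∈ range (Fintype.card V + 1) := by
    intro P _
    rw [Finset.mem_range, Nat.lt_succ_iff, ← Finset.card_univ (α := V)]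
    exact P.card_parts_le_card
  rw [← Finset.sum_fiberwise_of_maps_to maps (fun P => x.descFactorial P.parts.card)]
  apply Finset.sum_congr rfl
  intro k _
  have inner : ∑ P ∈ (univ.filter
      (fun P : Finpartition (Finset.univ : Finset V) =>
        ∀ p ∈ P.parts, ∀ u ∈ p, ∀ v ∈ p, ¬ G.Adj u v)).filter
      (fun P => P.parts.card = k), x.descFactorial P.parts.card
      = ∑ P ∈ (univ.filter
      (fun P : Finpartition (Finset.univ : Finset V) =>
        ∀ p ∈ P.parts, ∀ u ∈ p, ∀ v ∈ p, ¬ G.Adj u v)).filter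
      (fun P => P.parts.card = k), x.descFactorial k := by
    apply Finset.sum_congr rfl
    intro P hP
    rw [(Finset.mem_filter.1 hP).2]
  rw [inner, Finset.sum_const, smul_eq_mul]
  congr 1
  rw [graphStirling, Nat.card_eq_fintype_card, Fintype.card_subtype, Finset.filter_filter]
  congr 1
  ext P
  simp only [Finset.mem_filter]
  tauto
end CountLemma

lemma stirlingDescPad (m N x : ℕ) (hm : m < N) :
    ∑ k ∈ Finset.range N, (stirling2 m k : ℤ) * (x.descFactorial (k+1) : ℤ)
      = (x:ℤ) * ((x:ℤ)-1)^m := by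
  rw [pos_stirling_desc m x]
  apply (Finset.sum_subset (Finset.range_subset_range.2 (by omega)) ?_).symm
  intro k _ hk
  rw [stirling2_eq_zero (by simp only [Finset.mem_range] at hk; omega)]
  simp

lemma bell_pad (m N : ℕ) (hm : m < N) :
    ∑ k ∈ Finset.range N, (stirling2 m k : ℤ) = (bell m : ℤ) := by
  have h : (bell m : ℤ) = ∑ k ∈ Finset.range (m+1), (stirling2 m k : ℤ) := by
    rw [bell]; push_cast; rfl
  rw [h]
  apply (Finset.sum_subset (Finset.range_subset_range.2 (by omega)) ?_).symm
  intro k _ hk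
  rw [stirling2_eq_zero (by simp only [Finset.mem_range] at hk; omega)]
  simp

theorem cycle_bell_number (n : ℕ) (hn : 3 ≤ n) :
    ((∑ k ∈ Finset.range (n + 1), graphStirling (SimpleGraph.cycleGraph n) k : ℕ) : ℤ) =
      ∑ i ∈ Finset.range (n - 1), (-1 : ℤ) ^ i * (bell (n - 1 - i) : ℤ) := by
  classical
  obtain ⟨m, rfl⟩ : ∃ m, n = m + 2 := ⟨n - 2, by omega⟩
  show ((∑ k ∈ Finset.range (m + 2 + 1), graphStirling (SimpleGraph.cycleGraph (m+2)) k : ℕ) : ℤ)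
      = ∑ i ∈ Finset.range (m + 1), (-1 : ℤ) ^ i * (bell (m + 1 - i) : ℤ)
  set G := SimpleGraph.cycleGraph (m+2) with hG
  have hhyp : ∀ x : ℕ, ∑ k ∈ Finset.range (m + 2 + 1),
        (graphStirling G k : ℤ) * (x.descFactorial k : ℤ)
      = ∑ k ∈ Finset.range (m + 2 + 1),
        (if k = 0 then (0:ℤ)
          else ∑ i ∈ Finset.range (m+1), (-1:ℤ)^i * (stirling2 (m+1-i) (k-1) : ℤ))
          * (x.descFactorial k : ℤ) := by
    intro x
    have hA := countA G x
    rw [Fintype.card_fin] at hA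
    have hcast : ((chromaticCount G x : ℕ) : ℤ)
        = ∑ k ∈ Finset.range (m + 2 + 1), (graphStirling G k : ℤ) * (x.descFactorial k : ℤ) := by
      rw [hA]
      push_cast
      rfl
    have hBx : ((chromaticCount G x : ℕ) : ℤ)
        = ((x:ℤ)-1)^(m+2) + (-1)^(m+2) * ((x:ℤ)-1) := by
      rw [hG, chromaticCount]
      exact cycle_count m x
    have hR : ∑ k ∈ Finset.range (m + 2 + 1),
        (if k = 0 then (0:ℤ)
          else ∑ i ∈ Finset.range (m+1), (-1:ℤ)^i * (stirling2 (m+1-i) (k-1) : ℤ))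
          * (x.descFactorial k : ℤ)
        = ((x:ℤ)-1)^(m+2) + (-1)^(m+2) * ((x:ℤ)-1) := by
      rw [Finset.sum_range_succ' (fun k =>
        (if k = 0 then (0:ℤ)
          else ∑ i ∈ Finset.range (m+1), (-1:ℤ)^i * (stirling2 (m+1-i) (k-1) : ℤ))
          * (x.descFactorial k : ℤ)) (m+2)]
      simp only [if_neg (Nat.succ_ne_zero _), eq_self_iff_true, if_true, Nat.add_sub_cancel, zero_mul, add_zero]
      have e1 : ∀ k ∈ Finset.range (m+2),
          (∑ i ∈ Finset.range (m+1), (-1:ℤ)^i * (stirling2 (m+1-i) k : ℤ))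
            * (x.descFactorial (k+1) : ℤ)
          = ∑ i ∈ Finset.range (m+1),
              (-1:ℤ)^i * ((stirling2 (m+1-i) k : ℤ) * (x.descFactorial (k+1) : ℤ)) := by
        intro k _
        rw [Finset.sum_mul]
        apply Finset.sum_congr rfl
        intros
        ring
      rw [Finset.sum_congr rfl e1, Finset.sum_comm]
      have e2 : ∀ i ∈ Finset.range (m+1),
          ∑ k ∈ Finset.range (m+2),
            (-1:ℤ)^i * ((stirling2 (m+1-i) k : ℤ) * (x.descFactorial (k+1):ℤ))
          = (-1:ℤ)^i * ((x:ℤ) * ((x:ℤ)-1)^(m+1-i)) := by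
        intro i hi
        rw [← Finset.mul_sum, stirlingDescPad (m+1-i) (m+2) x (by omega)]
      rw [Finset.sum_congr rfl e2, telescope (m+2) (by omega) (x:ℤ)]
      apply Finset.sum_congr rfl
      intro i hi
      rw [show m+2-1-i = m+1-i from rfl]
      ring
    rw [← hcast, hBx, ← hR]
  have huniq := coeff_unique (m+2) (fun k => (graphStirling G k : ℤ))
    (fun k => if k = 0 then (0:ℤ)
      else ∑ i ∈ Finset.range (m+1), (-1:ℤ)^i * (stirling2 (m+1-i) (k-1) : ℤ)) hhyp
  push_cast
  have hsum : ∑ k ∈ Finset.range (m + 2 + 1), (graphStirling G k : ℤ)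
      = ∑ k ∈ Finset.range (m + 2 + 1),
          (if k = 0 then (0:ℤ)
            else ∑ i ∈ Finset.range (m+1), (-1:ℤ)^i * (stirling2 (m+1-i) (k-1) : ℤ)) :=
    Finset.sum_congr rfl (fun k hk => huniq k (by simp only [Finset.mem_range] at hk; omega))
  rw [hsum, Finset.sum_range_succ' (fun k =>
      if k = 0 then (0:ℤ)
        else ∑ i ∈ Finset.range (m+1), (-1:ℤ)^i * (stirling2 (m+1-i) (k-1) : ℤ)) (m+2)]
  simp only [if_neg (Nat.succ_ne_zero _), eq_self_iff_true, if_true, Nat.add_sub_cancel, add_zero]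
  rw [Finset.sum_comm]
  apply Finset.sum_congr rfl
  intro i hi
  rw [← Finset.mul_sum, bell_pad (m+1-i) (m+2) (by omega)]
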